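/- For any vectors f_1, ..., f_r in a vector space U over a commutative ring, the polarization identity holds: Σ_{σ ∈ Σ_r} f_{σ(1)} ⊗ f_{σ(2)} ⊗ ... ⊗ f_{σ(r)} = Σ_{I ⊆ {1,...,r}} (-1)^{r-|I|} (Σ_{i ∈ I} f_i)^{⊗r}. -/

import Mathlib

open Finset

lemma aux_sum (r : ℕ) (S : Finset (Fin r)) :
    ∑ I : Finset (Fin r), (if S ⊆ I then ((-1 : ℤ) ^ (r - I.card)) else 0)
      = if S = Finset.univ then 1 else 0 := by
  rw [← Equiv.sum_comp (Function.Involutive.toPerm _ (compl_involutive (α := Finset (Fin r))))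
    (fun I => if S ⊆ I then ((-1 : ℤ) ^ (r - I.card)) else 0)]
  simp only [Function.Involutive.coe_toPerm]
  have key : ∀ J : Finset (Fin r),
      (if S ⊆ Jᶜ then ((-1 : ℤ) ^ (r - Jᶜ.card)) else 0)
        = (if J ⊆ Sᶜ then ((-1 : ℤ) ^ J.card) else 0) := by
    intro J
    have hJ : J.card ≤ r := by simpa using Finset.card_le_univ J
    have h1 : S ⊆ Jᶜ ↔ J ⊆ Sᶜ :=
      ⟨fun h => Finset.subset_compl_comm.mp h, fun h => Finset.subset_compl_comm.mp h⟩
    have h2 : r - Jᶜ.card = J.card := by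
      rw [Finset.card_compl]; simp; omega
    simp only [h2]
    by_cases h : S ⊆ Jᶜ
    · rw [if_pos h, if_pos (h1.mp h)]
    · rw [if_neg h, if_neg (fun hh => h (h1.mpr hh))]
  refine (Finset.sum_congr rfl (fun J _ => key J)).trans ?_
  rw [← Finset.sum_filter]
  have : Finset.univ.filter (fun J : Finset (Fin r) => J ⊆ Sᶜ) = Sᶜ.powerset := by
    ext J; simp [Finset.mem_powerset]
  rw [this, Finset.sum_powerset_neg_one_pow_card]
  congr 1
  simp [Finset.compl_eq_empty_iff]


/-- The polarization identity: for vectors `f 1, …, f r` of a module `M` over a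
commutative ring `R`,
`∑_{σ ∈ Σ_r} f_{σ(1)} ⊗ ⋯ ⊗ f_{σ(r)} = ∑_{I ⊆ {1,…,r}} (-1)^{r-|I|} (∑_{i∈I} f i)^{⊗r}`. -/
theorem stmt_2 (R : Type*) [CommRing R] (M : Type*) [AddCommGroup M] [Module R M]
    (r : ℕ) (f : Fin r → M) :
    ∑ σ : Equiv.Perm (Fin r), PiTensorProduct.tprod R (fun i : Fin r => f (σ i))
      = ∑ I : Finset (Fin r),
          ((-1 : ℤ) ^ (r - I.card)) •
            PiTensorProduct.tprod R (fun _ : Fin r => ∑ i ∈ I, f i) := by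
  classical
  simp only [← Int.cast_smul_eq_zsmul R]
  symm
  have expand : ∀ I : Finset (Fin r),
      PiTensorProduct.tprod R (fun _ : Fin r => ∑ i ∈ I, f i)
        = ∑ p ∈ Fintype.piFinset (fun _ : Fin r => I),
            PiTensorProduct.tprod R (fun j => f (p j)) := fun I =>
    MultilinearMap.map_sum_finset (PiTensorProduct.tprod R) (fun _ j => f j) (fun _ => I)
  calc ∑ I : Finset (Fin r), (((-1:ℤ)^(r - I.card) : ℤ) : R) •
          PiTensorProduct.tprod R (fun _ : Fin r => ∑ i ∈ I, f i)
      = ∑ I : Finset (Fin r), ∑ p : Fin r → Fin r,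
          (((if Finset.image p Finset.univ ⊆ I then ((-1:ℤ)^(r - I.card)) else 0 : ℤ)) : R) •
            PiTensorProduct.tprod R (fun j => f (p j)) := by
        refine Finset.sum_congr rfl fun I _ => ?_
        rw [expand, Finset.smul_sum]
        rw [← Finset.sum_filter_of_ne (s := Finset.univ)
          (p := fun p => Finset.image p Finset.univ ⊆ I)
          (f := fun p => (((if Finset.image p Finset.univ ⊆ I
              then ((-1:ℤ)^(r - I.card)) else 0 : ℤ)) : R) •
            PiTensorProduct.tprod R (fun j => f (p j)))]
        · refine Finset.sum_congr ?_ fun p hp => ?_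
          · ext p
            simp [Fintype.mem_piFinset, Finset.image_subset_iff]
          · rw [if_pos (Finset.mem_filter.mp hp).2]
        · intro p _ h
          by_contra hc
          exact h (by rw [if_neg hc]; simp)
    _ = ∑ p : Fin r → Fin r, (((∑ I : Finset (Fin r),
          (if Finset.image p Finset.univ ⊆ I then ((-1:ℤ)^(r - I.card)) else 0) : ℤ)) : R) •
            PiTensorProduct.tprod R (fun j => f (p j)) := by
        rw [Finset.sum_comm]
        refine Finset.sum_congr rfl fun p _ => ?_
        rw [← Finset.sum_smul]
        congr 1
        push_cast
        rfl
    _ = ∑ p : Fin r → Fin r,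
          (((if Finset.image p Finset.univ = Finset.univ then (1:ℤ) else 0 : ℤ)) : R) •
            PiTensorProduct.tprod R (fun j => f (p j)) := by
        refine Finset.sum_congr rfl fun p _ => ?_
        rw [aux_sum]
    _ = ∑ p ∈ Finset.univ.filter (fun p : Fin r → Fin r =>
            Finset.image p Finset.univ = Finset.univ),
          PiTensorProduct.tprod R (fun j => f (p j)) := by
        rw [Finset.sum_filter]
        refine Finset.sum_congr rfl fun p _ => ?_
        by_cases h : Finset.image p Finset.univ = Finset.univ <;> simp [h]
    _ = ∑ σ : Equiv.Perm (Fin r), PiTensorProduct.tprod R (fun i : Fin r => f (σ i)) := by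
        have hbij : ∀ p : Fin r → Fin r, p ∈ Finset.univ.filter (fun p : Fin r → Fin r =>
            Finset.image p Finset.univ = Finset.univ) → Function.Bijective p := by
          intro p hp
          have hs : Function.Surjective p := by
            intro y
            have h1 := (Finset.mem_filter.mp hp).2
            have h2 : y ∈ Finset.image p Finset.univ := by rw [h1]; exact Finset.mem_univ y
            obtain ⟨x, _, hx⟩ := Finset.mem_image.mp h2
            exact ⟨x, hx⟩
          exact Finite.surjective_iff_bijective.mp hs
        refine Finset.sum_bij' (fun p hp => Equiv.ofBijective p (hbij p hp))
          (fun σ _ => ⇑σ) (fun _ _ => Finset.mem_univ _) ?_ ?_ ?_ ?_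
        · intro σ _
          simp only [Finset.mem_filter, Finset.mem_univ, true_and]
          ext y
          simp only [Finset.mem_image, Finset.mem_univ, true_and, iff_true]
          exact ⟨σ.symm y, σ.apply_symm_apply y⟩
        · intro p hp; rfl
        · intro σ _; ext x; rfl
        · intro p hp; rfl
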